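/- Let p be an odd prime and m ≥ 1 an integer. Then the independent domination polynomial D_i(Γ(ℤ_{p^m}), x) = (p^m − p^{m−1})·x + x^{p^{m−1}}, regarded as a polynomial over ℝ, has exactly one real root, namely x = 0. -/

import Mathlib

open Polynomial

/-- The comaximal graph of `ℤ/nℤ`: distinct `a, b` are adjacent iff the ideal
generated by `a` and `b` is the whole ring. -/
def comaximalGraph (n : ℕ) : SimpleGraph (ZMod n) where
  Adj a b := a ≠ b ∧ Ideal.span ({a, b} : Set (ZMod n)) = ⊤
  symm := by
    constructor
    rintro a b ⟨hab, h⟩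
    refine ⟨hab.symm, ?_⟩
    rwa [Set.pair_comm]
  loopless := by
    constructor
    rintro a ⟨h, -⟩
    exact h rfl

/-- `S` is an independent dominating set of `G`. -/
def IsIndepDomSet {V : Type*} (G : SimpleGraph V) (S : Finset V) : Prop :=
  (∀ a ∈ S, ∀ b ∈ S, ¬ G.Adj a b) ∧ ∀ v : V, v ∉ S → ∃ u ∈ S, G.Adj u v

/-- The independent domination polynomial `D_i(G, x) = Σ_k d_i(G,k) x^k`. -/
noncomputable def indepDomPoly {V : Type*} (G : SimpleGraph V) : Polynomial ℝ :=
  ∑ k ∈ Finset.range (Nat.card V + 1),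
    Polynomial.C ((Nat.card {S : Finset V // IsIndepDomSet G S ∧ S.card = k}) : ℝ) *
      Polynomial.X ^ k

/-- The independence polynomial `I(G, x) = Σ_k c_k x^k`. -/
noncomputable def indepPoly {V : Type*} (G : SimpleGraph V) : Polynomial ℝ :=
  ∑ k ∈ Finset.range (Nat.card V + 1),
    Polynomial.C ((Nat.card {S : Finset V //
        (∀ a ∈ S, ∀ b ∈ S, ¬ G.Adj a b) ∧ S.card = k}) : ℝ) *
      Polynomial.X ^ k

section aux

open Finset
open scoped Classical

variable {p m : ℕ}

lemma isUnit_zmod_iff (hp : p.Prime) (hm : 1 ≤ m) (a : ZMod (p ^ m)) :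
    IsUnit a ↔ ¬ p ∣ a.val := by
  haveI : NeZero (p ^ m) := ⟨pow_ne_zero m hp.pos.ne'⟩
  conv_lhs => rw [← ZMod.natCast_zmod_val a]
  rw [ZMod.isUnit_iff_coprime, Nat.coprime_pow_right_iff hm,
    Nat.coprime_comm, Nat.Prime.coprime_iff_not_dvd hp]

lemma span_pair_top_iff (hp : p.Prime) (hm : 1 ≤ m) (a b : ZMod (p ^ m)) :
    Ideal.span ({a, b} : Set (ZMod (p ^ m))) = ⊤ ↔ IsUnit a ∨ IsUnit b := by
  haveI : NeZero (p ^ m) := ⟨pow_ne_zero m hp.pos.ne'⟩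
  haveI : Fact p.Prime := ⟨hp⟩
  constructor
  · intro h
    by_contra hc
    push_neg at hc
    obtain ⟨ha, hb⟩ := hc
    rw [isUnit_zmod_iff hp hm, not_not] at ha hb
    rw [Ideal.eq_top_iff_one, Ideal.mem_span_pair] at h
    obtain ⟨r, s, hrs⟩ := h
    have hdvd : p ∣ p ^ m := dvd_pow_self p (by omega)
    let π := ZMod.castHom hdvd (ZMod p)
    have key : π (r * a + s * b) = 1 := by rw [hrs, map_one]
    have hπa : π a = 0 := by
      rw [← ZMod.natCast_zmod_val a, map_natCast, ZMod.natCast_eq_zero_iff]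
      exact ha
    have hπb : π b = 0 := by
      rw [← ZMod.natCast_zmod_val b, map_natCast, ZMod.natCast_eq_zero_iff]
      exact hb
    rw [map_add, map_mul, map_mul, hπa, hπb, mul_zero, mul_zero, add_zero] at key
    exact zero_ne_one key
  · rintro (h | h)
    · exact Ideal.eq_top_of_isUnit_mem _ (Ideal.subset_span (by simp)) h
    · exact Ideal.eq_top_of_isUnit_mem _ (Ideal.subset_span (by simp)) h

lemma comax_adj (hp : p.Prime) (hm : 1 ≤ m) (a b : ZMod (p ^ m)) :
    (comaximalGraph (p ^ m)).Adj a b ↔ a ≠ b ∧ (IsUnit a ∨ IsUnit b) :=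
  and_congr_right fun _ => span_pair_top_iff hp hm a b

lemma not_isUnit_zero' (hp : p.Prime) (hm : 1 ≤ m) :
    ¬ IsUnit (0 : ZMod (p ^ m)) := by
  haveI : Fact (1 < p ^ m) :=
    ⟨by have := hp.two_le; calc 1 < p := hp.one_lt
        _ ≤ p ^ m := Nat.le_self_pow (by omega) p⟩
  exact not_isUnit_zero

lemma indepDom_iff [NeZero (p ^ m)] (hp : p.Prime) (hm : 1 ≤ m) (S : Finset (ZMod (p ^ m))) :
    IsIndepDomSet (comaximalGraph (p ^ m)) S ↔
      (∃ u, IsUnit u ∧ S = {u}) ∨ S = univ.filter (fun a => ¬ IsUnit a) := by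
  constructor
  · rintro ⟨hind, hdom⟩
    by_cases hu : ∃ u ∈ S, IsUnit u
    · obtain ⟨u, huS, hu⟩ := hu
      refine Or.inl ⟨u, hu, Finset.eq_singleton_iff_unique_mem.2 ⟨huS, fun v hv => ?_⟩⟩
      by_contra hne
      exact hind u huS v hv ((comax_adj hp hm u v).2 ⟨fun h => hne h.symm, Or.inl hu⟩)
    · push_neg at hu
      refine Or.inr ?_
      ext a
      simp only [mem_filter, mem_univ, true_and]
      constructor
      · exact hu a
      · intro ha
        by_contra haS
        obtain ⟨u, huS, hadj⟩ := hdom a haS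
        rcases ((comax_adj hp hm u a).1 hadj).2 with h | h
        · exact hu u huS h
        · exact ha h
  · rintro (⟨u, hu, rfl⟩ | hS)
    · constructor
      · intro a ha b hb hadj
        rw [Finset.mem_singleton] at ha hb
        exact ((comax_adj hp hm a b).1 hadj).1 (ha.trans hb.symm)
      · intro v hv
        rw [Finset.mem_singleton] at hv
        exact ⟨u, Finset.mem_singleton_self u,
          (comax_adj hp hm u v).2 ⟨fun h => hv h.symm, Or.inl hu⟩⟩
    · subst hS
      constructor
      · intro a ha b hb hadj
        simp only [mem_filter, mem_univ, true_and] at ha hb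
        rcases ((comax_adj hp hm a b).1 hadj).2 with h | h
        · exact ha h
        · exact hb h
      · intro v hv
        simp only [mem_filter, mem_univ, true_and, not_not] at hv
        refine ⟨0, ?_, (comax_adj hp hm 0 v).2 ⟨fun h => ?_, Or.inr hv⟩⟩
        · simp only [mem_filter, mem_univ, true_and]
          exact not_isUnit_zero' hp hm
        · exact not_isUnit_zero' hp hm (h ▸ hv)

lemma indepDomPoly_eq_sum {V : Type*} [Fintype V] (G : SimpleGraph V) :
    indepDomPoly G =
      ∑ S ∈ univ.filter (fun S => IsIndepDomSet G S), (X : ℝ[X]) ^ S.card := by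
  rw [indepDomPoly]
  rw [← Finset.sum_fiberwise_of_maps_to (g := fun S : Finset V => S.card)
    (t := Finset.range (Nat.card V + 1))
    (fun S _ => Finset.mem_range.2 (by
      rw [Nat.card_eq_fintype_card]
      exact Nat.lt_succ_of_le (Finset.card_le_univ S)))
    (fun S => (X : ℝ[X]) ^ S.card)]
  refine Finset.sum_congr rfl fun k hk => ?_
  rw [show ∑ S ∈ (univ.filter fun S => IsIndepDomSet G S).filter (fun S => S.card = k),
        (X : ℝ[X]) ^ S.card
      = ∑ S ∈ (univ.filter fun S => IsIndepDomSet G S).filter (fun S => S.card = k),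
        (X : ℝ[X]) ^ k from
    Finset.sum_congr rfl fun S hS => by rw [(Finset.mem_filter.1 hS).2]]
  rw [Finset.sum_const, nsmul_eq_mul, Finset.filter_filter]
  rw [Nat.card_eq_fintype_card, Fintype.card_subtype]
  simp

noncomputable def unitsEquivSubtype {M : Type*} [Monoid M] : {x : M // IsUnit x} ≃ Mˣ where
  toFun x := x.2.unit
  invFun u := ⟨u, u.isUnit⟩
  left_inv x := Subtype.ext x.2.unit_spec
  right_inv u := Units.ext u.isUnit.unit_spec

lemma card_units_filter [NeZero (p ^ m)] (hp : p.Prime) (hm : 1 ≤ m) :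
    (univ.filter (fun a : ZMod (p ^ m) => IsUnit a)).card = (p ^ m).totient := by
  rw [← Fintype.card_subtype, Fintype.card_congr (unitsEquivSubtype),
    ZMod.card_units_eq_totient]

lemma totient_add (hp : p.Prime) (hm : 1 ≤ m) :
    (p ^ m).totient + p ^ (m - 1) = p ^ m := by
  rw [Nat.totient_prime_pow hp (by omega)]
  have h1 : p ^ m = p ^ (m - 1) * p := by
    rw [← pow_succ]; congr 1; omega
  have h2 : p - 1 + 1 = p := by have := hp.two_le; omega
  calc p ^ (m - 1) * (p - 1) + p ^ (m - 1) = p ^ (m - 1) * ((p - 1) + 1) := by ring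
    _ = p ^ m := by rw [h2, h1]

lemma card_nonunits_filter [NeZero (p ^ m)] (hp : p.Prime) (hm : 1 ≤ m) :
    (univ.filter (fun a : ZMod (p ^ m) => ¬ IsUnit a)).card = p ^ (m - 1) := by
  rw [Finset.filter_not, Finset.card_sdiff_of_subset (Finset.filter_subset _ _),
    Finset.card_univ, ZMod.card, card_units_filter hp hm]
  have := totient_add hp hm
  omega

lemma indepDomPoly_comax (hp : p.Prime) (hm : 1 ≤ m) :
    indepDomPoly (comaximalGraph (p ^ m)) =
      Polynomial.C ((p ^ m - p ^ (m - 1) : ℕ) : ℝ) * Polynomial.X +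
        Polynomial.X ^ (p ^ (m - 1)) := by
  haveI : NeZero (p ^ m) := ⟨pow_ne_zero m hp.pos.ne'⟩
  rw [indepDomPoly_eq_sum]
  have hfilt : (univ.filter (fun S => IsIndepDomSet (comaximalGraph (p ^ m)) S)) =
      insert (univ.filter fun a : ZMod (p ^ m) => ¬ IsUnit a)
        ((univ.filter fun a : ZMod (p ^ m) => IsUnit a).image fun u => ({u} : Finset _)) := by
    ext S
    simp only [mem_filter, mem_univ, true_and, mem_insert, mem_image]
    rw [indepDom_iff hp hm]
    constructor
    · rintro (⟨u, hu, rfl⟩ | rfl)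
      · exact Or.inr ⟨u, hu, rfl⟩
      · exact Or.inl rfl
    · rintro (rfl | ⟨u, hu, rfl⟩)
      · exact Or.inr rfl
      · exact Or.inl ⟨u, hu, rfl⟩
  rw [hfilt]
  have hN : (univ.filter fun a : ZMod (p ^ m) => ¬ IsUnit a) ∉
      ((univ.filter fun a : ZMod (p ^ m) => IsUnit a).image fun u => ({u} : Finset _)) := by
    rintro h
    simp only [mem_image, mem_filter, mem_univ, true_and] at h
    obtain ⟨u, hu, hEq⟩ := h
    have h0 : (0 : ZMod (p ^ m)) ∈ (univ.filter fun a : ZMod (p ^ m) => ¬ IsUnit a) := by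
      simp only [mem_filter, mem_univ, true_and]
      exact not_isUnit_zero' hp hm
    rw [← hEq, Finset.mem_singleton] at h0
    exact not_isUnit_zero' hp hm (h0 ▸ hu)
  rw [Finset.sum_insert hN, Finset.sum_image (fun u _ v _ h => Finset.singleton_inj.1 h)]
  simp only [Finset.card_singleton, pow_one]
  rw [Finset.sum_const, card_units_filter hp hm, card_nonunits_filter hp hm]
  have : (p ^ m).totient = p ^ m - p ^ (m - 1) := by
    have := totient_add hp hm; omega
  rw [this, nsmul_eq_mul, Polynomial.C_eq_natCast, add_comm]

end aux

/-- For an odd prime `p` and `m ≥ 1`, the polynomial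
`D_i(Γ(ℤ_{p^m}), x) = (p^m − p^(m−1))·x + x^(p^(m−1))` over `ℝ`
has exactly one real root, namely `x = 0`. -/
theorem stmt_9 (p m : ℕ) (hp : p.Prime) (hodd : Odd p) (hm : 1 ≤ m) :
    indepDomPoly (comaximalGraph (p ^ m)) =
      Polynomial.C ((p ^ m - p ^ (m - 1) : ℕ) : ℝ) * Polynomial.X +
        Polynomial.X ^ (p ^ (m - 1)) ∧
    ∀ x : ℝ, (indepDomPoly (comaximalGraph (p ^ m))).eval x = 0 ↔ x = 0 := by
  refine ⟨indepDomPoly_comax hp hm, fun x => ?_⟩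
  rw [indepDomPoly_comax hp hm]
  simp only [Polynomial.eval_add, Polynomial.eval_mul, Polynomial.eval_C,
    Polynomial.eval_X, Polynomial.eval_pow]
  set q := p ^ (m - 1) with hq
  set a : ℝ := ((p ^ m - p ^ (m - 1) : ℕ) : ℝ) with ha
  have hqodd : Odd q := hodd.pow
  have hq1 : 1 ≤ q := Nat.one_le_iff_ne_zero.2 (pow_ne_zero _ hp.pos.ne')
  have hapos : 0 < a := by
    rw [ha]
    have : p ^ (m - 1) < p ^ m := Nat.pow_lt_pow_right hp.one_lt (by omega)
    exact_mod_cast Nat.sub_pos_of_lt this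
  constructor
  · intro h
    have hxq : x ^ q = x * x ^ (q - 1) := by
      rw [← pow_succ']
      congr 1
      omega
    rw [hxq] at h
    have hfac : x * (a + x ^ (q - 1)) = 0 := by ring_nf; ring_nf at h; linarith
    rcases mul_eq_zero.1 hfac with h1 | h1
    · exact h1
    · exfalso
      have heven : Even (q - 1) := Nat.Odd.sub_odd hqodd odd_one
      have := heven.pow_nonneg (a := x)
      linarith
  · rintro rfl
    rw [zero_pow (by omega), mul_zero, zero_add]
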